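/- dim H^2_k(m_0) = 1 if k = 2j+1 with j ≥ 2 (i.e., k is odd and k ≥ 5), and dim H^2_k(m_0) = 0 otherwise, for the second Chevalley–Eilenberg cohomology of m_0 graded by weight. -/

import Mathlib

set_option linter.unusedSectionVars false
set_option maxHeartbeats 1000000


variable (K : Type*) [Field K] [CharZero K]

/-- The cochain `e^i` (for `i ≥ 1`) dual to the basis vector `e_i` of the Lie algebra
`m₀` (basis `e_1, e_2, ...`, brackets `[e_1, e_i] = e_{i+1}` for `i ≥ 2`); the cochain
complex of `m₀` is the exterior algebra on the span of the `e^i`, `i ≥ 1`. -/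
noncomputable def e (i : ℕ) : ExteriorAlgebra K (ℕ →₀ K) :=
  ExteriorAlgebra.ι K (Finsupp.single (i - 1) (1 : K))

/-- The monomial cochain `e^{i_1} ∧ ... ∧ e^{i_q}`. -/
noncomputable def mono (s : Finset ℕ) : ExteriorAlgebra K (ℕ →₀ K) :=
  ((s.sort (· ≤ ·)).map (e K)).prod

/-- `C^q_k`: the span of the `q`-cochains `e^{i_1} ∧ ... ∧ e^{i_q}`,
`1 ≤ i_1 < ... < i_q`, of weight `i_1 + ... + i_q = k`. -/
noncomputable def LamWt (q k : ℕ) : Submodule K (ExteriorAlgebra K (ℕ →₀ K)) :=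
  Submodule.span K {x | ∃ s : Finset ℕ,
    s.card = q ∧ (∀ i ∈ s, 1 ≤ i) ∧ (∑ i ∈ s, i) = k ∧ x = mono K s}

/-- `C^q`: the span of the `q`-cochains `e^{i_1} ∧ ... ∧ e^{i_q}` (all weights). -/
noncomputable def LamDeg (q : ℕ) : Submodule K (ExteriorAlgebra K (ℕ →₀ K)) :=
  Submodule.span K {x | ∃ s : Finset ℕ,
    s.card = q ∧ (∀ i ∈ s, 1 ≤ i) ∧ x = mono K s}



section Aux

noncomputable def wedge (l : List ℕ) : ExteriorAlgebra K (ℕ →₀ K) :=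
  (l.map (e K)).prod

noncomputable def ck (i : ℕ) : Module.End K (ExteriorAlgebra K (ℕ →₀ K)) :=
  CliffordAlgebra.contractLeft (Finsupp.lapply (i - 1))

noncomputable def Phi : List ℕ → Module.End K (ExteriorAlgebra K (ℕ →₀ K))
  | [] => LinearMap.id
  | i :: t => (Phi t) ∘ₗ (ck K i)

variable {K}

theorem wedge_nil : wedge K [] = 1 := rfl
theorem wedge_cons (a : ℕ) (l : List ℕ) : wedge K (a :: l) = e K a * wedge K l := by
  simp [wedge]

theorem ck_one (i : ℕ) : ck K i 1 = 0 := CliffordAlgebra.contractLeft_one _ _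

theorem ck_mul (i j : ℕ) (hi : 1 ≤ i) (hj : 1 ≤ j) (x : ExteriorAlgebra K (ℕ →₀ K)) :
    ck K i (e K j * x) = (if i = j then (1:K) else 0) • x - e K j * ck K i x := by
  rw [e, ck, CliffordAlgebra.contractLeft_ι_mul]
  congr 2
  rw [Finsupp.lapply_apply, Finsupp.single_apply]
  congr 1
  simp only [eq_iff_iff]
  omega

theorem ck_wedge_not_mem (i : ℕ) (hi : 1 ≤ i) (l : List ℕ) (hl : ∀ j ∈ l, 1 ≤ j)
    (hmem : i ∉ l) : ck K i (wedge K l) = 0 := by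
  induction l with
  | nil => exact ck_one i
  | cons a t ih =>
    rw [wedge_cons, ck_mul i a hi (hl a (by simp)),
      ih (fun j hj => hl j (by simp [hj])) (fun h => hmem (by simp [h])),
      if_neg (fun h => hmem (by simp [h]))]
    simp

theorem ck_wedge_mem_span (i : ℕ) (hi : 1 ≤ i) (l : List ℕ) (hl : ∀ j ∈ l, 1 ≤ j) :
    ck K i (wedge K l) ∈ Submodule.span K {x | ∃ m, m.Sublist l ∧ x = wedge K m} := by
  induction l with
  | nil => rw [wedge_nil, ck_one]; exact Submodule.zero_mem _
  | cons a t ih =>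
    rw [wedge_cons, ck_mul i a hi (hl a (by simp))]
    apply sub_mem
    · apply Submodule.smul_mem
      exact Submodule.subset_span ⟨t, List.sublist_cons_self a t, rfl⟩
    · have h2 := ih (fun j hj => hl j (by simp [hj]))
      have hmono : Submodule.span K {x | ∃ m, m.Sublist t ∧ x = wedge K m} ≤
          Submodule.span K {x | ∃ m, m.Sublist (a :: t) ∧ x = wedge K m} := by
        apply Submodule.span_mono
        rintro x ⟨m, hm, rfl⟩
        exact ⟨m, hm.trans (List.sublist_cons_self a t), rfl⟩
      -- e a * (span) ⊆ span
      refine Submodule.span_induction ?_ ?_ ?_ ?_ h2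
      · rintro x ⟨m, hm, rfl⟩
        rw [← wedge_cons]
        exact Submodule.subset_span ⟨a :: m, hm.cons_cons a, rfl⟩
      · simp
      · intro x y _ _ hx hy; rw [mul_add]; exact add_mem hx hy
      · intro c x _ hx; rw [mul_smul_comm]; exact Submodule.smul_mem _ c hx

theorem Phi_nil (x : ExteriorAlgebra K (ℕ →₀ K)) : Phi K [] x = x := rfl
theorem Phi_cons (i : ℕ) (t : List ℕ) (x : ExteriorAlgebra K (ℕ →₀ K)) :
    Phi K (i :: t) x = Phi K t (ck K i x) := rfl

/-- Off-diagonal vanishing. -/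
theorem Phi_wedge_eq_zero (l : List ℕ) (hl : ∀ j ∈ l, 1 ≤ j) :
    ∀ l' : List ℕ, (∀ j ∈ l', 1 ≤ j) → (∃ w ∈ l, w ∉ l') → Phi K l (wedge K l') = 0 := by
  induction l with
  | nil => rintro l' _ ⟨w, hw, _⟩; exact absurd hw List.not_mem_nil
  | cons i t ih =>
    rintro l' hl' ⟨w, hw, hwl'⟩
    rw [Phi_cons]
    by_cases hmem : i ∈ l'
    · have hwt : w ∈ t := by
        rcases List.mem_cons.mp hw with h | h
        · exact absurd hmem (h ▸ hwl')
        · exact h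
      have hsp := ck_wedge_mem_span (K := K) i (hl i (by simp)) l' hl'
      refine Submodule.span_induction (p := fun x _ => Phi K t x = 0) ?_ (map_zero _) ?_ ?_ hsp
      · rintro x ⟨m, hm, rfl⟩
        exact ih (fun j hj => hl j (by simp [hj])) m
          (fun j hj => hl' j (hm.mem hj)) ⟨w, hwt, fun h => hwl' (hm.mem h)⟩
      · intro x y _ _ hx hy; rw [map_add, hx, hy, add_zero]
      · intro c x _ hx; rw [map_smul, hx, smul_zero]
    · rw [ck_wedge_not_mem i (hl i (by simp)) l' hl' hmem, map_zero]

/-- Diagonal value. -/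
theorem Phi_wedge_self (l : List ℕ) (hl : ∀ j ∈ l, 1 ≤ j) (hnd : l.Nodup) :
    Phi K l (wedge K l) = 1 := by
  induction l with
  | nil => rfl
  | cons i t ih =>
    rw [Phi_cons, wedge_cons, ck_mul i i (hl i (by simp)) (hl i (by simp)),
      ck_wedge_not_mem i (hl i (by simp)) t (fun j hj => hl j (by simp [hj]))
        (List.nodup_cons.mp hnd).1]
    simp only [eq_self_iff_true, if_true, one_smul, mul_zero, sub_zero]
    exact ih (fun j hj => hl j (by simp [hj])) (List.nodup_cons.mp hnd).2

noncomputable def coeff (l : List ℕ) : ExteriorAlgebra K (ℕ →₀ K) →ₗ[K] K :=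
  (ExteriorAlgebra.algebraMapInv).toLinearMap ∘ₗ Phi K l

theorem coeff_wedge_self (l : List ℕ) (hl : ∀ j ∈ l, 1 ≤ j) (hnd : l.Nodup) :
    coeff (K := K) l (wedge K l) = 1 := by
  show ExteriorAlgebra.algebraMapInv (Phi K l (wedge K l)) = 1
  rw [Phi_wedge_self l hl hnd, map_one]

theorem coeff_wedge_eq_zero (l : List ℕ) (hl : ∀ j ∈ l, 1 ≤ j)
    (l' : List ℕ) (hl' : ∀ j ∈ l', 1 ≤ j) (h : ∃ w ∈ l, w ∉ l') :
    coeff (K := K) l (wedge K l') = 0 := by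
  show ExteriorAlgebra.algebraMapInv (Phi K l (wedge K l')) = 0
  rw [Phi_wedge_eq_zero l hl l' hl' h, map_zero]

theorem wedge_swap (a b : ℕ) (t : List ℕ) :
    wedge K (a :: b :: t) = - wedge K (b :: a :: t) := by
  rw [wedge_cons, wedge_cons, wedge_cons, wedge_cons, ← mul_assoc, ← mul_assoc]
  have := ExteriorAlgebra.ι_add_mul_swap (R := K)
    (Finsupp.single (a-1) (1:K)) (Finsupp.single (b-1) (1:K))
  have h2 : e K a * e K b = - (e K b * e K a) := by
    rw [e, e]; linear_combination (norm := noncomm_ring) this * 1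
  rw [h2, neg_mul]

theorem wedge_dup (a : ℕ) (t : List ℕ) : wedge K (a :: a :: t) = 0 := by
  rw [wedge_cons, wedge_cons, ← mul_assoc, e, ExteriorAlgebra.ι_sq_zero, zero_mul]

theorem wedge_singleton (a : ℕ) : wedge K [a] = e K a := by simp [wedge]
theorem wedge_pair (a b : ℕ) : wedge K [a, b] = e K a * e K b := by simp [wedge]
theorem wedge_triple (a b c : ℕ) : wedge K [a, b, c] = e K a * (e K b * e K c) := by
  simp [wedge, mul_assoc]

theorem mono_singleton (a : ℕ) : mono K {a} = e K a := by
  rw [mono, Finset.sort_singleton]; exact wedge_singleton a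

theorem mono_empty : mono K ∅ = 1 := by rw [mono, Finset.sort_empty]; rfl

theorem mono_pair {a b : ℕ} (h : a < b) : mono K {a, b} = wedge K [a, b] := by
  rw [mono, Finset.sort_insert (· ≤ ·) (by simp; omega) (by simp; omega),
    Finset.sort_singleton]
  rfl

theorem one_mem_LamDeg0 : (1 : ExteriorAlgebra K (ℕ →₀ K)) ∈ LamDeg K 0 :=
  Submodule.subset_span ⟨∅, by simp, by simp, mono_empty.symm⟩

theorem e_mem_LamDeg1 {i : ℕ} (hi : 1 ≤ i) : e K i ∈ LamDeg K 1 :=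
  Submodule.subset_span ⟨{i}, by simp, by simpa using hi, (mono_singleton i).symm⟩

section D

variable (d : Module.End K (ExteriorAlgebra K (ℕ →₀ K)))
  (hLeib : ∀ p : ℕ, ∀ x ∈ LamDeg K p, ∀ y,
      d (x * y) = d x * y + ((-1 : K) ^ p) • (x * d y))
  (h1 : d (e K 1) = 0) (h2 : d (e K 2) = 0)
  (hd : ∀ i, 2 ≤ i → d (e K (i + 1)) = e K 1 * e K i)

include hLeib in
theorem d_one : d 1 = 0 := by
  have := hLeib 0 1 one_mem_LamDeg0 1
  simp only [mul_one, one_mul, pow_zero, one_smul] at this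
  exact left_eq_add.mp this

include hLeib in
theorem d_emul {i : ℕ} (hi : 1 ≤ i) (y : ExteriorAlgebra K (ℕ →₀ K)) :
    d (e K i * y) = d (e K i) * y - e K i * d y := by
  have := hLeib 1 (e K i) (e_mem_LamDeg1 hi) y
  rw [this, pow_one, neg_one_smul, sub_eq_add_neg]

include hd in
theorem d_e {j : ℕ} (hj : 3 ≤ j) : d (e K j) = e K 1 * e K (j - 1) := by
  have : j = (j - 1) + 1 := by omega
  rw [this, hd (j-1) (by omega)]
  congr 1

include hLeib h1 h2 hd in
theorem dW1 {k : ℕ} (hk : 3 ≤ k) : d (wedge K [1, k-1]) = 0 := by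
  rw [wedge_pair, d_emul d hLeib (le_refl 1), h1, zero_mul, zero_sub]
  rcases Nat.lt_or_ge (k-1) 3 with h | h
  · have : k - 1 = 2 := by omega
    rw [this, h2, mul_zero, neg_zero]
  · rw [d_e d hd h, ← mul_assoc, e, ExteriorAlgebra.ι_sq_zero, zero_mul, neg_zero]

include hLeib h1 h2 hd in
theorem dW2 {k i : ℕ} (h2i : 2 ≤ i) (hik : i < k - i) (hki : 3 ≤ k - i) :
    d (wedge K [i, k-i]) = wedge K [1, i-1, k-i] + wedge K [1, i, k-i-1] := by
  rw [wedge_pair, d_emul d hLeib (by omega), d_e d hd hki, wedge_triple, wedge_triple]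
  rcases Nat.lt_or_ge i 3 with h | h
  · have hi2 : i = 2 := by omega
    subst hi2
    rw [h2, zero_mul, zero_sub]
    have hswap : e K 2 * (e K 1 * e K (k - 2 - 1)) = -(e K 1 * (e K 2 * e K (k-2-1))) := by
      have := ExteriorAlgebra.ι_add_mul_swap (R := K)
        (Finsupp.single (2-1) (1:K)) (Finsupp.single (1-1) (1:K))
      have h21 : e K 2 * e K 1 = -(e K 1 * e K 2) := by
        rw [e, e]; linear_combination (norm := noncomm_ring) this * 1
      rw [← mul_assoc, h21, neg_mul, mul_assoc]
    rw [hswap, neg_neg]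
    have hdup : e K 1 * (e K (2-1) * e K (k - 2)) = 0 := by
      norm_num
      rw [← mul_assoc, e, ExteriorAlgebra.ι_sq_zero, zero_mul]
    rw [hdup, zero_add]
  · rw [d_e d hd (by omega)]
    have hswap : e K i * (e K 1 * e K (k - i - 1)) = -(e K 1 * (e K i * e K (k-i-1))) := by
      have := ExteriorAlgebra.ι_add_mul_swap (R := K)
        (Finsupp.single (i-1) (1:K)) (Finsupp.single (1-1) (1:K))
      have h21 : e K i * e K 1 = -(e K 1 * e K i) := by
        rw [e, e]; linear_combination (norm := noncomm_ring) this * 1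
      rw [← mul_assoc, h21, neg_mul, mul_assoc]
    rw [hswap, mul_assoc, sub_neg_eq_add]

end D

theorem coeff_pair {a b a' b' : ℕ} (ha : 1 ≤ a) (hab : a < b) (ha' : 1 ≤ a')
    (ha'b' : a' < b') (hsum : a + b = a' + b') :
    coeff (K := K) [a, b] (wedge K [a', b']) = if a = a' then 1 else 0 := by
  by_cases h : a = a'
  · have hb : b = b' := by omega
    subst h; subst hb
    rw [if_pos rfl]
    exact coeff_wedge_self [a, b] (by simp; omega) (by simp; omega)
  · rw [if_neg h]
    refine coeff_wedge_eq_zero [a,b] (by simp; omega) [a',b'] (by simp; omega) ⟨a, by simp, ?_⟩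
    intro hmem
    simp only [List.mem_cons, List.not_mem_nil, or_false] at hmem
    omega

theorem coeff_triple {a b a' b' : ℕ} (ha : 2 ≤ a) (hab : a < b) (ha' : 1 ≤ a')
    (ha'b' : a' ≤ b') (hsum : a + b = a' + b') :
    coeff (K := K) [1, a, b] (wedge K [1, a', b']) = if a = a' then 1 else 0 := by
  by_cases h : a = a'
  · have hb : b = b' := by omega
    subst h; subst hb
    rw [if_pos rfl]
    exact coeff_wedge_self [1, a, b] (by simp; omega) (by simp; omega)
  · rw [if_neg h]
    refine coeff_wedge_eq_zero [1,a,b] (by simp; omega) [1,a',b'] (by simp; omega)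
      ⟨a, by simp, ?_⟩
    intro hmem
    simp only [List.mem_cons, List.not_mem_nil, or_false] at hmem
    omega

theorem mem_span_image_finset {V : Type*} [AddCommGroup V] [Module K V] {f : ℕ → V}
    {t : Finset ℕ} {x : V} (hx : x ∈ Submodule.span K (f '' ↑t)) :
    ∃ c : ℕ → K, x = ∑ i ∈ t, c i • f i := by
  refine Submodule.span_induction (p := fun x _ => ∃ c : ℕ → K, x = ∑ i ∈ t, c i • f i)
    ?_ ?_ ?_ ?_ hx
  · rintro y ⟨i, hi, rfl⟩
    exact ⟨fun j => if j = i then 1 else 0, by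
      simp only [ite_smul, one_smul, zero_smul]
      rw [Finset.sum_ite_eq' t i f, if_pos (by exact_mod_cast hi)]⟩
  · exact ⟨0, by simp⟩
  · rintro y z _ _ ⟨c, rfl⟩ ⟨c', rfl⟩
    exact ⟨c + c', by rw [← Finset.sum_add_distrib]; simp [add_smul]⟩
  · rintro r y _ ⟨c, rfl⟩
    exact ⟨r • c, by rw [Finset.smul_sum]; simp [smul_smul]⟩

theorem LamWt1_eq {k : ℕ} (hk : 1 ≤ k) : LamWt K 1 k = Submodule.span K {e K k} := by
  unfold LamWt
  congr 1
  ext x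
  constructor
  · rintro ⟨s, hcard, hpos, hsum, rfl⟩
    obtain ⟨a, rfl⟩ := Finset.card_eq_one.mp hcard
    simp only [Finset.sum_singleton] at hsum
    subst hsum
    simp [mono_singleton]
  · rintro rfl
    exact ⟨{k}, by simp, by simpa using hk, by simp, (mono_singleton k).symm⟩

theorem LamWt1_zero : LamWt K 1 0 = ⊥ := by
  unfold LamWt
  convert Submodule.span_empty
  ext x
  simp only [Set.mem_setOf_eq, Set.mem_empty_iff_false, iff_false]
  rintro ⟨s, hcard, hpos, hsum, rfl⟩
  obtain ⟨a, rfl⟩ := Finset.card_eq_one.mp hcard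
  simp only [Finset.sum_singleton] at hsum
  exact absurd (hpos a (by simp)) (by omega)

theorem LamWt2_eq (k : ℕ) : LamWt K 2 k =
    Submodule.span K ((fun i => wedge K [i, k-i]) '' ↑(Finset.Icc 1 ((k-1)/2))) := by
  unfold LamWt
  congr 1
  ext x
  constructor
  · rintro ⟨s, hcard, hpos, hsum, rfl⟩
    obtain ⟨a, b, hab, rfl⟩ := Finset.card_eq_two.mp hcard
    rcases Nat.lt_or_ge a b with h | h
    · rw [Finset.sum_pair hab] at hsum
      refine ⟨a, ?_, ?_⟩
      · simp only [Finset.coe_Icc, Set.mem_Icc]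
        have := hpos a (by simp)
        have := hpos b (by simp)
        omega
      · have hb : b = k - a := by omega
        subst hb
        exact (mono_pair h).symm
    · have h' : b < a := by omega
      rw [Finset.sum_pair hab] at hsum
      refine ⟨b, ?_, ?_⟩
      · simp only [Finset.coe_Icc, Set.mem_Icc]
        have := hpos a (by simp)
        have := hpos b (by simp)
        omega
      · have ha : a = k - b := by omega
        subst ha
        rw [Finset.pair_comm]
        exact (mono_pair h').symm
  · rintro ⟨i, hi, rfl⟩
    simp only [Finset.coe_Icc, Set.mem_Icc] at hi
    refine ⟨{i, k - i}, ?_, ?_, ?_, ?_⟩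
    · rw [Finset.card_insert_of_notMem (by simp; omega), Finset.card_singleton]
    · intro j hj
      simp only [Finset.mem_insert, Finset.mem_singleton] at hj
      rcases hj with rfl | rfl <;> omega
    · rw [Finset.sum_pair (by omega)]; omega
    · exact (mono_pair (by omega)).symm

section D2

variable (d : Module.End K (ExteriorAlgebra K (ℕ →₀ K)))
  (hLeib : ∀ p : ℕ, ∀ x ∈ LamDeg K p, ∀ y,
      d (x * y) = d x * y + ((-1 : K) ^ p) • (x * d y))
  (h1 : d (e K 1) = 0) (h2 : d (e K 2) = 0)
  (hd : ∀ i, 2 ≤ i → d (e K (i + 1)) = e K 1 * e K i)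

include hLeib h1 h2 hd in
theorem key_eqs {k : ℕ} (hk : 5 ≤ k) (c : ℕ → K)
    (hdx : d (∑ i ∈ Finset.Icc 1 ((k-1)/2), c i • wedge K [i, k-i]) = 0)
    {a : ℕ} (ha : 2 ≤ a) (hak : 2*a+1 < k) :
    c a + (if a + 1 ≤ (k-1)/2 then c (a+1) else 0) = 0 := by
  set m := (k-1)/2 with hm
  have hm2 : 2 ≤ m := by omega
  have h0 : coeff (K := K) [1, a, k-1-a] (d (∑ i ∈ Finset.Icc 1 m, c i • wedge K [i, k-i]))
      = 0 := by rw [hdx, map_zero]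
  rw [map_sum, map_sum] at h0
  have hterm : ∀ i ∈ Finset.Icc 1 m,
      coeff (K := K) [1, a, k-1-a] (d (c i • wedge K [i, k-i]))
        = c i * ((if i = a + 1 then 1 else 0) + (if i = a then 1 else 0)) := by
    intro i hi
    simp only [Finset.mem_Icc] at hi
    rw [map_smul, map_smul, smul_eq_mul]
    congr 1
    rcases Nat.lt_or_ge i 2 with hlt | hge
    · have hi1 : i = 1 := by omega
      subst hi1
      rw [dW1 d hLeib h1 h2 hd (by omega : 3 ≤ k), map_zero]
      rw [if_neg (by omega), if_neg (by omega)]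
      norm_num
    · rw [dW2 d hLeib h1 h2 hd hge (by omega) (by omega), map_add]
      rw [coeff_triple (a := a) (b := k-1-a) (a' := i-1) (b' := k-i) ha (by omega)
          (by omega) (by omega) (by omega),
        coeff_triple (a := a) (b := k-1-a) (a' := i) (b' := k-i-1) ha (by omega)
          (by omega) (by omega) (by omega)]
      have e1 : (a = i - 1) ↔ (i = a + 1) := by omega
      have e2 : (a = i) ↔ (i = a) := eq_comm
      rw [if_congr e1 rfl rfl, if_congr e2 rfl rfl]
  rw [Finset.sum_congr rfl hterm] at h0
  simp only [mul_add, Finset.sum_add_distrib, mul_ite, mul_one, mul_zero] at h0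
  rw [Finset.sum_ite_eq' (Finset.Icc 1 m) (a+1) c,
    Finset.sum_ite_eq' (Finset.Icc 1 m) a c] at h0
  have hin : a ∈ Finset.Icc 1 m := by simp only [Finset.mem_Icc]; omega
  have hiff : (a + 1 ∈ Finset.Icc 1 m) ↔ (a + 1 ≤ m) := by
    simp only [Finset.mem_Icc]; omega
  rw [if_pos hin, if_congr hiff rfl rfl] at h0
  exact (add_comm _ _).trans h0


include hLeib h1 h2 hd in
theorem dv_zero {k : ℕ} (hk : 5 ≤ k) (hodd : k % 2 = 1) :
    d (∑ i ∈ Finset.Icc 2 ((k-1)/2), ((-1:K)^i) • wedge K [i, k-i]) = 0 := by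
  set m := (k-1)/2 with hm
  have hm2 : 2 ≤ m := by omega
  rw [map_sum]
  set G : ℕ → ExteriorAlgebra K (ℕ →₀ K) := fun j => ((-1:K)^j) • wedge K [1, j, k-1-j]
    with hG
  have hterm : ∀ i ∈ Finset.Icc 2 m, d (((-1:K)^i) • wedge K [i, k-i]) = G i - G (i-1) := by
    intro i hi
    simp only [Finset.mem_Icc] at hi
    rw [map_smul, dW2 d hLeib h1 h2 hd hi.1 (by omega) (by omega)]
    have h1' : k - i - 1 = k - 1 - i := by omega
    have h2' : k - 1 - (i-1) = k - i := by omega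
    have h3' : ((-1:K))^i = -((-1:K))^(i-1) := by
      conv_lhs => rw [show i = (i-1)+1 by omega]
      rw [pow_succ, mul_neg_one]
    simp only [hG, h2']
    rw [h1', smul_add, h3']
    module
  rw [Finset.sum_congr rfl hterm]
  have hIco : Finset.Icc 2 m = Finset.Ico 2 (m+1) := by rw [Finset.Ico_add_one_right_eq_Icc]
  rw [hIco, Finset.sum_Ico_eq_sum_range]
  have hterm2 : ∀ j ∈ Finset.range (m+1-2),
      G (2+j) - G (2+j-1) = G (j+1+1) - G (j+1) := by
    intro j _
    rw [show 2+j = j+1+1 by omega, show j+1+1-1 = j+1 by omega]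
  rw [Finset.sum_congr rfl hterm2, Finset.sum_range_sub (fun j => G (j+1))]
  have hG1 : G 1 = 0 := by
    simp only [hG, pow_one]
    rw [wedge_dup 1 [k-1-1], smul_zero]
  have hGm : G m = 0 := by
    simp only [hG]
    rw [show k - 1 - m = m by omega, wedge_cons, wedge_dup m [], mul_zero, smul_zero]
  rw [show m + 1 - 2 + 1 = m by omega, hGm, show 0 + 1 = 1 by omega, hG1, sub_zero]

theorem c_even {k : ℕ} (hk : 5 ≤ k) (heven : k % 2 = 0) (c : ℕ → K)
    (heqs : ∀ a, 2 ≤ a → 2*a+1 < k →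
      c a + (if a + 1 ≤ (k-1)/2 then c (a+1) else 0) = 0) :
    ∀ j, 2 ≤ j → j ≤ (k-1)/2 → c j = 0 := by
  have H : ∀ t j, 2 ≤ j → j ≤ (k-1)/2 → (k-1)/2 - j = t → c j = 0 := by
    intro t
    induction t with
    | zero =>
      intro j hj2 hjm hmj
      have hx := heqs j hj2 (by omega)
      rw [if_neg (by omega), add_zero] at hx
      exact hx
    | succ t ih =>
      intro j hj2 hjm hmj
      have hx := heqs j hj2 (by omega)
      rw [if_pos (by omega), ih (j+1) (by omega) (by omega) (by omega), add_zero] at hx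
      exact hx
  intro j hj2 hjm
  exact H ((k-1)/2 - j) j hj2 hjm rfl

theorem c_odd {k : ℕ} (hk : 5 ≤ k) (hodd : k % 2 = 1) (c : ℕ → K)
    (heqs : ∀ a, 2 ≤ a → 2*a+1 < k →
      c a + (if a + 1 ≤ (k-1)/2 then c (a+1) else 0) = 0) :
    ∀ j, 2 ≤ j → j ≤ (k-1)/2 → c j = (-1:K)^j * c 2 := by
  intro j hj2
  induction j, hj2 using Nat.le_induction with
  | base => intro _; norm_num
  | succ j hj2 ih =>
    intro hjm
    have hx := heqs j hj2 (by omega)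
    rw [if_pos (by omega), ih (by omega)] at hx
    linear_combination hx

include hd in
theorem B_eq {k : ℕ} (hk : 3 ≤ k) :
    (LamWt K 1 k).map d = Submodule.span K {wedge K [1, k-1]} := by
  rw [LamWt1_eq (by omega), Submodule.map_span, Set.image_singleton]
  congr 1
  rw [d_e d hd hk, wedge_pair]

theorem wedge_pair_ne_zero {a b : ℕ} (ha : 1 ≤ a) (hab : a < b) :
    wedge K [a, b] ≠ 0 := by
  intro h
  have := coeff_wedge_self (K := K) [a, b] (by simp; omega) (by simp; omega)
  rw [h, map_zero] at this
  exact zero_ne_one this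

end D2

end Aux



/-- `dim H^2_k(m₀) = 1` if `k` is odd and `k ≥ 5`, and `0` otherwise, for the second
Chevalley–Eilenberg cohomology of `m₀` graded by weight.  Here `d` is the
Chevalley–Eilenberg differential of `m₀`. -/
theorem stmt9 (d : Module.End K (ExteriorAlgebra K (ℕ →₀ K)))
    (hLeib : ∀ p : ℕ, ∀ x ∈ LamDeg K p, ∀ y,
      d (x * y) = d x * y + ((-1 : K) ^ p) • (x * d y))
    (h1 : d (e K 1) = 0) (h2 : d (e K 2) = 0)
    (hd : ∀ i, 2 ≤ i → d (e K (i + 1)) = e K 1 * e K i)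
    (k : ℕ) :
    Module.finrank K ↥(LamWt K 2 k ⊓ LinearMap.ker d) -
      Module.finrank K ↥((LamWt K 1 k).map d) =
        if k % 2 = 1 ∧ 5 ≤ k then 1 else 0 := by
  rcases Nat.lt_or_ge k 3 with hk3 | hk3
  · -- k ≤ 2
    have hA : LamWt K 2 k ⊓ LinearMap.ker d = ⊥ := by
      rw [LamWt2_eq]
      have hempty : Finset.Icc 1 ((k-1)/2) = ∅ := by
        ext j; simp only [Finset.mem_Icc, Finset.notMem_empty, iff_false]; omega
      rw [hempty]
      simp
    have hB : (LamWt K 1 k).map d = ⊥ := by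
      interval_cases k
      · rw [LamWt1_zero, Submodule.map_bot]
      · rw [LamWt1_eq (by omega), Submodule.map_span, Set.image_singleton, h1,
          Submodule.span_zero_singleton]
      · rw [LamWt1_eq (by omega), Submodule.map_span, Set.image_singleton, h2,
          Submodule.span_zero_singleton]
    rw [hA, hB, finrank_bot, if_neg (by omega)]
  · -- 3 ≤ k
    have hw1ne : wedge K [1, k-1] ≠ 0 := wedge_pair_ne_zero (le_refl 1) (by omega)
    have hBspan := B_eq (K := K) d hd hk3
    have hB : Module.finrank K ↥((LamWt K 1 k).map d) = 1 := by
      rw [hBspan]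
      exact finrank_span_singleton hw1ne
    rcases Nat.lt_or_ge k 5 with hk5 | hk5
    · -- k = 3 or 4
      have hIcc : Finset.Icc 1 ((k-1)/2) = {1} := by
        ext j; simp only [Finset.mem_Icc, Finset.mem_singleton]; omega
      have hLam : LamWt K 2 k = Submodule.span K {wedge K [1, k-1]} := by
        rw [LamWt2_eq, hIcc]
        congr 1
        simp
      have hker : LamWt K 2 k ≤ LinearMap.ker d := by
        rw [hLam, Submodule.span_le, Set.singleton_subset_iff]
        exact LinearMap.mem_ker.mpr (dW1 d hLeib h1 h2 hd hk3)
      rw [inf_eq_left.mpr hker, hLam, finrank_span_singleton hw1ne, hB,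
        if_neg (by omega)]
    · -- 5 ≤ k
      set m := (k-1)/2 with hm
      have hm2 : 2 ≤ m := by omega
      have hw1mem : wedge K [1, k-1] ∈ LamWt K 2 k := by
        rw [LamWt2_eq]
        exact Submodule.subset_span ⟨1, by simp only [Finset.coe_Icc, Set.mem_Icc]; omega, rfl⟩
      have hw1ker : wedge K [1, k-1] ∈ LinearMap.ker d :=
        LinearMap.mem_ker.mpr (dW1 d hLeib h1 h2 hd hk3)
      rcases Nat.even_or_odd k with he | ho
      · -- k even
        have heven : k % 2 = 0 := Nat.even_iff.mp he
        have hZ : LamWt K 2 k ⊓ LinearMap.ker d = Submodule.span K {wedge K [1, k-1]} := by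
          apply le_antisymm
          · rintro x ⟨hx1, hx2⟩
            obtain ⟨c, hc⟩ := mem_span_image_finset ((LamWt2_eq (K := K) k) ▸ hx1)
            have hdx : d (∑ i ∈ Finset.Icc 1 m, c i • wedge K [i, k-i]) = 0 := by
              rw [← hc]; exact LinearMap.mem_ker.mp hx2
            have hcz := c_even hk5 heven c
              (fun a ha hak => key_eqs d hLeib h1 h2 hd hk5 c hdx ha hak)
            have hsplit : Finset.Icc 1 m = insert 1 (Finset.Icc 2 m) := by
              ext j; simp only [Finset.mem_Icc, Finset.mem_insert]; omega
            rw [hsplit, Finset.sum_insert (by simp)] at hc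
            have hrest : ∑ i ∈ Finset.Icc 2 m, c i • wedge K [i, k-i] = 0 := by
              apply Finset.sum_eq_zero
              intro i hi
              simp only [Finset.mem_Icc] at hi
              rw [hcz i hi.1 hi.2, zero_smul]
            rw [hrest, add_zero] at hc
            exact Submodule.mem_span_singleton.mpr ⟨c 1, hc.symm⟩
          · rw [Submodule.span_le, Set.singleton_subset_iff]
            exact ⟨hw1mem, hw1ker⟩
        rw [hZ, finrank_span_singleton hw1ne, hB, if_neg (by omega)]
      · -- k odd
        have hodd : k % 2 = 1 := Nat.odd_iff.mp ho
        set v : ExteriorAlgebra K (ℕ →₀ K) :=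
          ∑ i ∈ Finset.Icc 2 m, ((-1:K)^i) • wedge K [i, k-i] with hv
        have hvmem : v ∈ LamWt K 2 k := by
          rw [LamWt2_eq]
          apply Submodule.sum_mem
          intro i hi
          simp only [Finset.mem_Icc] at hi
          exact Submodule.smul_mem _ _ (Submodule.subset_span
            ⟨i, by simp only [Finset.coe_Icc, Set.mem_Icc]; omega, rfl⟩)
        have hvker : v ∈ LinearMap.ker d :=
          LinearMap.mem_ker.mpr (dv_zero d hLeib h1 h2 hd hk5 hodd)
        have hZ : LamWt K 2 k ⊓ LinearMap.ker d =
            Submodule.span K {wedge K [1, k-1], v} := by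
          apply le_antisymm
          · rintro x ⟨hx1, hx2⟩
            obtain ⟨c, hc⟩ := mem_span_image_finset ((LamWt2_eq (K := K) k) ▸ hx1)
            have hdx : d (∑ i ∈ Finset.Icc 1 m, c i • wedge K [i, k-i]) = 0 := by
              rw [← hc]; exact LinearMap.mem_ker.mp hx2
            have hcz := c_odd hk5 hodd c
              (fun a ha hak => key_eqs d hLeib h1 h2 hd hk5 c hdx ha hak)
            have hsplit : Finset.Icc 1 m = insert 1 (Finset.Icc 2 m) := by
              ext j; simp only [Finset.mem_Icc, Finset.mem_insert]; omega
            rw [hsplit, Finset.sum_insert (by simp)] at hc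
            have hrest : ∑ i ∈ Finset.Icc 2 m, c i • wedge K [i, k-i] = c 2 • v := by
              rw [hv, Finset.smul_sum]
              apply Finset.sum_congr rfl
              intro i hi
              simp only [Finset.mem_Icc] at hi
              rw [hcz i hi.1 hi.2, smul_smul, mul_comm ((-1:K)^i) (c 2)]
            rw [hrest] at hc
            exact Submodule.mem_span_pair.mpr ⟨c 1, c 2, hc.symm⟩
          · rw [Submodule.span_le]
            rintro y (rfl | rfl)
            · exact ⟨hw1mem, hw1ker⟩
            · exact ⟨hvmem, hvker⟩
        -- coefficient functionals
        have hphi1w : coeff (K := K) [1, k-1] (wedge K [1, k-1]) = 1 := by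
          rw [coeff_pair (le_refl 1) (by omega) (le_refl 1) (by omega) rfl, if_pos rfl]
        have hphi1v : coeff (K := K) [1, k-1] v = 0 := by
          rw [hv, map_sum]
          apply Finset.sum_eq_zero
          intro i hi
          simp only [Finset.mem_Icc] at hi
          rw [map_smul, coeff_pair (le_refl 1) (by omega) (by omega) (by omega) (by omega),
            if_neg (by omega), smul_zero]
        have hphi2w : coeff (K := K) [2, k-2] (wedge K [1, k-1]) = 0 := by
          rw [coeff_pair (by omega) (by omega) (by omega) (by omega) (by omega),
            if_neg (by omega)]
        have hphi2v : coeff (K := K) [2, k-2] v = 1 := by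
          rw [hv, map_sum]
          have hterm : ∀ i ∈ Finset.Icc 2 m,
              coeff (K := K) [2, k-2] (((-1:K)^i) • wedge K [i, k-i])
                = if i = 2 then ((-1:K)^i) else 0 := by
            intro i hi
            simp only [Finset.mem_Icc] at hi
            rw [map_smul, coeff_pair (by omega) (by omega) (by omega) (by omega) (by omega)]
            by_cases h : i = 2
            · rw [if_pos (by omega : (2:ℕ) = i), if_pos h, smul_eq_mul, mul_one]
            · rw [if_neg (by omega), if_neg h, smul_zero]
          rw [Finset.sum_congr rfl hterm,
            Finset.sum_ite_eq' (Finset.Icc 2 m) 2 (fun i => ((-1:K)^i)),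
            if_pos (by simp only [Finset.mem_Icc]; omega)]
          norm_num
        have hind : LinearIndependent K ![wedge K [1, k-1], v] := by
          rw [LinearIndependent.pair_iff]
          intro s t hst
          have e1 : coeff (K := K) [1, k-1] (s • wedge K [1, k-1] + t • v) = 0 := by
            rw [hst, map_zero]
          have e2 : coeff (K := K) [2, k-2] (s • wedge K [1, k-1] + t • v) = 0 := by
            rw [hst, map_zero]
          rw [map_add, map_smul, map_smul, hphi1w, hphi1v, smul_eq_mul, smul_eq_mul,
            mul_one, mul_zero, add_zero] at e1
          rw [map_add, map_smul, map_smul, hphi2w, hphi2v, smul_eq_mul, smul_eq_mul,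
            mul_one, mul_zero, zero_add] at e2
          exact ⟨e1, e2⟩
        have hfr : Module.finrank K
            ↥(Submodule.span K {wedge K [1, k-1], v}) = 2 := by
          have := finrank_span_eq_card hind
          rw [Matrix.range_cons_cons_empty] at this
          rw [this]
          simp
        rw [hZ, hfr, hB, if_pos (by omega)]
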